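/- Let X be a real Banach space, let K : X×X → ℝ be a kernel satisfying conditions (1)–(5) below, and let f : X → ℝ ∪ {+∞} be proper, lower semicontinuous and bounded below. If 0 < α ≤ 1, c_K is Fréchet differentiable with derivative α-Hölder continuous on every bounded subset of X, and c_K is strongly coercive (c_K(x)/‖x‖ → +∞ as ‖x‖ → ∞), then for every n ∈ ℕ the function Δ_{K,n} f is Fréchet differentiable with derivative α-Hölder continuous on every bounded subset of X. -/

import Mathlib

open scoped BigOperators

/-- The convex envelope of a function `h : X → ℝ`, given by the infimum over all
finite convex combinations. -/
noncomputable def convEnv {X : Type*} [NormedAddCommGroup X] [NormedSpace ℝ X]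
    (h : X → ℝ) (x : X) : ℝ :=
  sInf { r : ℝ | ∃ (m : ℕ) (l : Fin m → ℝ) (z : Fin m → X),
    (∀ i, 0 < l i) ∧ ∑ i, l i = 1 ∧ ∑ i, l i • z i = x ∧ ∑ i, l i * h (z i) = r }

/-- The inf-convolution `I_{K,n} f (x) = inf_y ( f(y) + n K(x,y) )` for `f` with values
in `ℝ ∪ {+∞} ⊆ EReal`. -/
noncomputable def infConvK {X : Type*} [NormedAddCommGroup X]
    (K : X → X → ℝ) (f : X → EReal) (n : ℕ) (x : X) : EReal :=
  ⨅ y, f y + (((n : ℝ) * K x y : ℝ) : EReal)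

/-- `Δ_{K,n} f = co( I_{K,n} f + n c_K ) − n c_K`. -/
noncomputable def DeltaK {X : Type*} [NormedAddCommGroup X] [NormedSpace ℝ X]
    (K : X → X → ℝ) (cK : X → ℝ) (f : X → EReal) (n : ℕ) (x : X) : ℝ :=
  convEnv (fun z => (infConvK K f n z).toReal + (n : ℝ) * cK z) x - (n : ℝ) * cK x

set_option linter.unusedSectionVars false
set_option linter.unusedVariables false


open scoped BigOperators

section aux
variable {X : Type*} [NormedAddCommGroup X] [NormedSpace ℝ X]

/-- Lipschitz bound on balls for a differentiable function with Hölder derivative. -/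
lemma aux_lip (cK : X → ℝ) (α : ℝ) (hα0 : 0 < α)
    (hcdiff : Differentiable ℝ cK)
    (hchold : ∀ r : ℝ, 0 < r → ∃ L : ℝ, 0 < L ∧ ∀ x y : X, ‖x‖ ≤ r → ‖y‖ ≤ r →
      ‖fderiv ℝ cK x - fderiv ℝ cK y‖ ≤ L * ‖x - y‖ ^ α)
    (ρ : ℝ) (hρ : 0 < ρ) :
    ∃ G : ℝ, 0 ≤ G ∧ ∀ x y : X, ‖x‖ ≤ ρ → ‖y‖ ≤ ρ → |cK x - cK y| ≤ G * ‖x - y‖ := by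
  obtain ⟨L, hL, hLb⟩ := hchold ρ hρ
  refine ⟨‖fderiv ℝ cK 0‖ + L * ρ ^ α, by positivity, fun x y hx hy => ?_⟩
  have hb : ∀ w : X, w ∈ Metric.closedBall (0:X) ρ →
      ‖fderiv ℝ cK w‖ ≤ ‖fderiv ℝ cK 0‖ + L * ρ ^ α := by
    intro w hw
    rw [Metric.mem_closedBall, dist_zero_right] at hw
    have h1 : ‖fderiv ℝ cK w - fderiv ℝ cK 0‖ ≤ L * ‖w - 0‖ ^ α :=
      hLb w 0 hw (by simp [hρ.le])
    have h2 : ‖w - 0‖ ^ α ≤ ρ ^ α := by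
      rw [sub_zero]
      exact Real.rpow_le_rpow (norm_nonneg w) hw hα0.le
    calc ‖fderiv ℝ cK w‖ ≤ ‖fderiv ℝ cK w - fderiv ℝ cK 0‖ + ‖fderiv ℝ cK 0‖ := by
          simpa using norm_add_le (fderiv ℝ cK w - fderiv ℝ cK 0) (fderiv ℝ cK 0)
      _ ≤ L * ρ ^ α + ‖fderiv ℝ cK 0‖ := by
          refine add_le_add_left (h1.trans ?_) _
          exact mul_le_mul_of_nonneg_left h2 hL.le
      _ = ‖fderiv ℝ cK 0‖ + L * ρ ^ α := by ring
  have := (convex_closedBall (0:X) ρ).norm_image_sub_le_of_norm_fderiv_le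
    (fun w _ => hcdiff w) hb (by simpa [Metric.mem_closedBall, dist_zero_right] using hy)
    (by simpa [Metric.mem_closedBall, dist_zero_right] using hx)
  calc |cK x - cK y| = ‖cK x - cK y‖ := rfl
    _ ≤ (‖fderiv ℝ cK 0‖ + L * ρ ^ α) * ‖x - y‖ := this

/-- `cK` is convex. -/
lemma aux_cK_convex (K : X → X → ℝ) (cK : X → ℝ) (dK : X → X → ℝ)
    (hK1 : (∀ x y : X, 0 ≤ K x y) ∧ ∀ x : X, K x x = 0)
    (hK5 : (∀ x y : X, K x y = cK x - dK x y) ∧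
      ∀ y : X, LowerSemicontinuous (fun x => dK x y) ∧
        ConvexOn ℝ Set.univ (fun x => dK x y)) :
    ConvexOn ℝ Set.univ cK := by
  have hdle : ∀ x y : X, dK x y ≤ cK x := by
    intro x y
    have := hK1.1 x y
    rw [hK5.1 x y] at this; linarith
  have hdiag : ∀ x : X, cK x = dK x x := by
    intro x
    have := hK1.2 x
    rw [hK5.1 x x] at this; linarith
  refine ⟨convex_univ, fun x _ y _ a b ha hb hab => ?_⟩
  set c := a • x + b • y
  calc cK c = dK c c := hdiag c
    _ ≤ a * dK x c + b * dK y c := by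
        have := (hK5.2 c).2.2 (Set.mem_univ x) (Set.mem_univ y) ha hb hab
        simpa [smul_eq_mul] using this
    _ ≤ a * cK x + b * cK y := by
        have h1 := hdle x c
        have h2 := hdle y c
        have := mul_le_mul_of_nonneg_left h1 ha
        have := mul_le_mul_of_nonneg_left h2 hb
        nlinarith
    _ = a • cK x + b • cK y := by simp [smul_eq_mul]

end aux


section aux
variable {X : Type*} [NormedAddCommGroup X] [NormedSpace ℝ X]

/-- Linear lower bounds of every slope, from coercivity plus Lipschitz-on-balls. -/
lemma aux_linear_lb (cK : X → ℝ)
    (hlip : ∀ ρ : ℝ, 0 < ρ → ∃ G : ℝ, 0 ≤ G ∧ ∀ x y : X, ‖x‖ ≤ ρ → ‖y‖ ≤ ρ →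
      |cK x - cK y| ≤ G * ‖x - y‖)
    (hcoer : ∀ M : ℝ, ∃ R : ℝ, ∀ x : X, R ≤ ‖x‖ → M ≤ cK x / ‖x‖)
    (s : ℝ) (hs : 0 < s) :
    ∃ C : ℝ, 0 ≤ C ∧ ∀ z : X, s * ‖z‖ - C ≤ cK z := by
  obtain ⟨R0, hR0⟩ := hcoer s
  set R := max R0 1 with hRdef
  have hR1 : (1:ℝ) ≤ R := le_max_right _ _
  obtain ⟨G, hG0, hGb⟩ := hlip R (by linarith)
  refine ⟨max 0 (s * R + G * R - cK 0), le_max_left _ _, fun z => ?_⟩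
  rcases le_or_gt ‖z‖ R with h | h
  · have h1 : |cK z - cK 0| ≤ G * ‖z - 0‖ := hGb z 0 h (by simp; linarith)
    have h2 : cK 0 - G * ‖z‖ ≤ cK z := by
      rw [sub_zero] at h1
      have := abs_le.1 h1
      linarith [this.1]
    have h3 : s * ‖z‖ ≤ s * R := mul_le_mul_of_nonneg_left h hs.le
    have h4 : G * ‖z‖ ≤ G * R := mul_le_mul_of_nonneg_left h hG0
    have h5 : s * R + G * R - cK 0 ≤ max 0 (s * R + G * R - cK 0) := le_max_right _ _
    linarith
  · have hz0 : 0 < ‖z‖ := by linarith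
    have := hR0 z (le_trans (le_max_left _ _) h.le)
    have h6 : s * ‖z‖ ≤ cK z := by
      rw [le_div_iff₀ hz0] at this
      linarith
    have h7 : (0:ℝ) ≤ max 0 (s * R + G * R - cK 0) := le_max_left _ _
    linarith

/-- A convex function bounded above and below on a ball of radius `2δ` is Lipschitz on
the ball of radius `δ`. -/
lemma aux_convex_lip (σ : X → ℝ) (hσ : ConvexOn ℝ Set.univ σ)
    (δ M mlow : ℝ) (hδ : 0 < δ)
    (hub : ∀ z : X, ‖z‖ ≤ 2 * δ → σ z ≤ M)
    (hlb : ∀ z : X, ‖z‖ ≤ 2 * δ → mlow ≤ σ z) :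
    ∀ x y : X, ‖x‖ ≤ δ → ‖y‖ ≤ δ → σ x - σ y ≤ ((M - mlow) / δ) * ‖x - y‖ := by
  intro x y hx hy
  rcases eq_or_ne x y with rfl | hne
  · simp
  have hd : 0 < ‖x - y‖ := norm_sub_pos_iff.2 hne
  set d := ‖x - y‖ with hddef
  set z := x + (δ / d) • (x - y) with hzdef
  have hzn : ‖z‖ ≤ 2 * δ := by
    have : ‖(δ / d) • (x - y)‖ = δ := by
      rw [norm_smul, Real.norm_eq_abs, abs_of_pos (by positivity)]
      field_simp
      exact hddef.symm
    calc ‖z‖ ≤ ‖x‖ + ‖(δ / d) • (x - y)‖ := norm_add_le _ _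
      _ ≤ δ + δ := by rw [this]; linarith
      _ = 2 * δ := by ring
  -- x = t • z + (1 - t) • y with t = d / (d + δ)
  set t := d / (d + δ) with htdef
  have ht0 : 0 < t := by positivity
  have ht1 : t < 1 := by
    rw [htdef, div_lt_one (by positivity)]; linarith
  have hcomb : x = t • z + (1 - t) • y := by
    have hdne : d ≠ 0 := hd.ne'
    have hdd : d + δ ≠ 0 := by positivity
    have hc : t * (δ / d) = δ / (d + δ) := by rw [htdef]; field_simp
    have hone : t + δ / (d + δ) = 1 := by rw [htdef]; field_simp
    have hzero : (1:ℝ) - t - δ / (d + δ) = 0 := by linarith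
    have : t • z + (1 - t) • y
        = (t + δ / (d + δ)) • x + ((1:ℝ) - t - δ / (d + δ)) • y := by
      rw [hzdef, smul_add, smul_smul, hc]
      module
    rw [this, hone, hzero]
    simp
  have hconv := hσ.2 (Set.mem_univ z) (Set.mem_univ y) ht0.le
    (sub_nonneg.2 ht1.le) (by ring : t + (1 - t) = 1)
  rw [← hcomb] at hconv
  have hσz : σ z ≤ M := hub z hzn
  have hσy : mlow ≤ σ y := hlb y (by linarith)
  have ht' : t ≤ d / δ := by
    rw [htdef, div_le_div_iff₀ (by positivity) hδ]
    nlinarith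
  have key : σ x - σ y ≤ t * (M - mlow) := by
    have : σ x ≤ t * σ z + (1 - t) * σ y := by simpa [smul_eq_mul] using hconv
    nlinarith
  calc σ x - σ y ≤ t * (M - mlow) := key
    _ ≤ (d / δ) * (M - mlow) := by
        rcases le_or_gt 0 (M - mlow) with h | h
        · exact mul_le_mul_of_nonneg_right ht' h
        · nlinarith [hub y (by linarith), hlb y (by linarith)]
    _ = ((M - mlow) / δ) * ‖x - y‖ := by rw [hddef]; ring

end aux


section aux
variable {X : Type*} [NormedAddCommGroup X] [NormedSpace ℝ X]

/-- Every continuous convex function on a real normed space has a subgradient at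
every point. -/
lemma aux_subgradient (σ : X → ℝ) (hσ : ConvexOn ℝ Set.univ σ) (hcont : Continuous σ)
    (x : X) : ∃ p : X →L[ℝ] ℝ, ∀ z, σ x + p (z - x) ≤ σ z := by
  set S : Set (X × ℝ) := {q | σ q.1 < q.2} with hSdef
  have hSopen : IsOpen S := isOpen_lt (hcont.comp continuous_fst) continuous_snd
  have hSconv : Convex ℝ S := by
    intro q hq q' hq' a b ha hb hab
    simp only [hSdef, Set.mem_setOf_eq] at hq hq' ⊢
    have h1 : σ (a • q.1 + b • q'.1) ≤ a * σ q.1 + b * σ q'.1 := by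
      have := hσ.2 (Set.mem_univ q.1) (Set.mem_univ q'.1) ha hb hab
      simpa [smul_eq_mul] using this
    have h2 : a * σ q.1 + b * σ q'.1 < a * q.2 + b * q'.2 := by
      rcases eq_or_lt_of_le ha with ha0 | ha'
      · have hb1 : b = 1 := by linarith
        simp only [← ha0, hb1]; simpa using hq'
      · have hL : a * σ q.1 < a * q.2 := by exact (mul_lt_mul_iff_right₀ ha').2 hq
        have hR : b * σ q'.1 ≤ b * q'.2 := mul_le_mul_of_nonneg_left hq'.le hb
        linarith
    have : σ (a • q + b • q').1 < (a • q + b • q').2 := by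
      simp only [Prod.fst_add, Prod.snd_add, Prod.smul_fst, Prod.smul_snd]
      calc σ (a • q.1 + b • q'.1) ≤ a * σ q.1 + b * σ q'.1 := h1
        _ < a * q.2 + b * q'.2 := h2
        _ = a • q.2 + b • q'.2 := by simp [smul_eq_mul]
    exact this
  have hP : (x, σ x) ∉ S := by simp [hSdef]
  obtain ⟨F, hF⟩ := geometric_hahn_banach_open_point hSconv hSopen hP
  set φ : X →L[ℝ] ℝ := F.comp (ContinuousLinearMap.inl ℝ X ℝ) with hφdef
  set c : ℝ := F (0, 1) with hcdef
  have hdecomp : ∀ (z : X) (t : ℝ), F (z, t) = φ z + t * c := by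
    intro z t
    have h1 : (z, t) = (z, (0:ℝ)) + t • ((0:X), (1:ℝ)) := by
      simp [Prod.ext_iff]
    rw [h1, map_add, map_smul]
    simp [hφdef, hcdef, ContinuousLinearMap.inl, smul_eq_mul]
  have hc : c < 0 := by
    have h1 : ((x, σ x + 1) : X × ℝ) ∈ S := by simp [hSdef]
    have := hF _ h1
    rw [hdecomp, hdecomp] at this
    linarith
  have hkey : ∀ z : X, φ z + σ z * c ≤ φ x + σ x * c := by
    intro z
    have h1 : ∀ ε : ℝ, 0 < ε → φ z + (σ z + ε) * c < φ x + σ x * c := by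
      intro ε hε
      have hmem : ((z, σ z + ε) : X × ℝ) ∈ S := by simp [hSdef]; linarith
      have := hF _ hmem
      rwa [hdecomp, hdecomp] at this
    refine le_of_forall_pos_le_add (fun ε hε => ?_)
    have hεc : 0 < ε / (-c) := div_pos hε (neg_pos.2 hc)
    have := h1 (ε / (-c)) hεc
    have hcc : (ε / (-c)) * c = -ε := by
      rw [div_mul_eq_mul_div, mul_div_assoc, div_neg, div_self hc.ne, mul_neg_one]
    nlinarith [this]
  refine ⟨(-c)⁻¹ • φ, fun z => ?_⟩
  have hphi : φ z - φ x ≤ (σ x - σ z) * c := by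
    have := hkey z; nlinarith [this]
  have hpos : 0 < (-c)⁻¹ := inv_pos.2 (neg_pos.2 hc)
  have hval : ((-c)⁻¹ • φ) (z - x) = (-c)⁻¹ * (φ z - φ x) := by
    simp [map_sub, smul_eq_mul, mul_sub]
  rw [hval]
  have h2 : (-c)⁻¹ * (φ z - φ x) ≤ (-c)⁻¹ * ((σ x - σ z) * c) :=
    mul_le_mul_of_nonneg_left hphi hpos.le
  have h3 : (-c)⁻¹ * ((σ x - σ z) * c) = σ z - σ x := by
    rw [inv_neg, neg_mul, mul_comm (σ x - σ z) c, ← mul_assoc, inv_mul_cancel₀ hc.ne]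
    ring
  linarith [h2.trans_eq h3]

end aux


section aux
variable {X : Type*} [NormedAddCommGroup X] [NormedSpace ℝ X]

/-- A function with a subgradient at `x` and a Hölder-type upper bound is differentiable
at `x`. -/
lemma aux_hasFDerivAt (σ : X → ℝ) (x : X) (p : X →L[ℝ] ℝ) (C α : ℝ) (hα0 : 0 < α)
    (hsub : ∀ z, σ x + p (z - x) ≤ σ z)
    (hup : ∀ h : X, ‖h‖ ≤ 1 → σ (x + h) ≤ σ x + p h + C * ‖h‖ ^ (1 + α)) :
    HasFDerivAt σ p x := by
  set C' := |C| + 1 with hC'def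
  have hC'pos : 0 < C' := by positivity
  rw [hasFDerivAt_iff_isLittleO_nhds_zero, Asymptotics.isLittleO_iff]
  intro c hc
  set d := min 1 ((c / C') ^ (α⁻¹)) with hddef
  have hd : 0 < d := by
    apply lt_min one_pos
    apply Real.rpow_pos_of_pos
    positivity
  filter_upwards [Metric.ball_mem_nhds (0:X) hd] with h hh
  rw [Metric.mem_ball, dist_zero_right] at hh
  have hh1 : ‖h‖ ≤ 1 := le_trans hh.le (min_le_left _ _)
  have hlow : 0 ≤ σ (x + h) - σ x - p h := by
    have := hsub (x + h)
    have he : x + h - x = h := by abel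
    rw [he] at this
    linarith
  have hupp : σ (x + h) - σ x - p h ≤ C' * ‖h‖ ^ (1 + α) := by
    have := hup h hh1
    have h2 : C * ‖h‖ ^ (1 + α) ≤ C' * ‖h‖ ^ (1 + α) := by
      apply mul_le_mul_of_nonneg_right
        (by rw [hC'def]; linarith [le_abs_self C]) (Real.rpow_nonneg (norm_nonneg _) _)
    linarith
  rcases eq_or_ne h 0 with rfl | hne
  · simp [Real.zero_rpow (by positivity : (1:ℝ) + α ≠ 0)] at hupp ⊢
  · have hn : 0 < ‖h‖ := norm_pos_iff.2 hne
    have hsplit : ‖h‖ ^ (1 + α) = ‖h‖ * ‖h‖ ^ α := by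
      rw [Real.rpow_add hn, Real.rpow_one]
    have hα : ‖h‖ ^ α ≤ c / C' := by
      have h1 : ‖h‖ ≤ (c / C') ^ (α⁻¹) := le_trans hh.le (min_le_right _ _)
      calc ‖h‖ ^ α ≤ ((c / C') ^ (α⁻¹)) ^ α :=
            Real.rpow_le_rpow (norm_nonneg _) h1 hα0.le
        _ = c / C' := by
            rw [← Real.rpow_mul (by positivity : (0:ℝ) ≤ c / C'),
              inv_mul_cancel₀ hα0.ne', Real.rpow_one]
    calc ‖σ (x + h) - σ x - p h‖ = σ (x + h) - σ x - p h := by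
          rw [Real.norm_eq_abs, abs_of_nonneg hlow]
      _ ≤ C' * (‖h‖ * ‖h‖ ^ α) := by rw [← hsplit]; exact hupp
      _ ≤ C' * (‖h‖ * (c / C')) := by
          apply mul_le_mul_of_nonneg_left _ hC'pos.le
          exact mul_le_mul_of_nonneg_left hα hn.le
      _ = c * ‖h‖ := by field_simp
/-- Hölder continuity of the gradient of a convex differentiable function with a
Hölder-type upper estimate. -/
lemma aux_holder_grad (σ : X → ℝ) (α C r ℓ : ℝ) (hα0 : 0 < α) (hC : 0 ≤ C) (hℓ : 0 ≤ ℓ)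
    (hdiff : Differentiable ℝ σ)
    (hsub : ∀ z w : X, σ z + fderiv ℝ σ z (w - z) ≤ σ w)
    (hup : ∀ z h : X, ‖z‖ ≤ r → ‖h‖ ≤ 1 →
      σ (z + h) ≤ σ z + fderiv ℝ σ z h + C * ‖h‖ ^ (1 + α))
    (hgradbd : ∀ z : X, ‖z‖ ≤ r → ‖fderiv ℝ σ z‖ ≤ ℓ) :
    ∀ x y : X, ‖x‖ ≤ r → ‖y‖ ≤ r →
      ‖fderiv ℝ σ x - fderiv ℝ σ y‖ ≤ (2 * C + 2 * ℓ) * ‖x - y‖ ^ α := by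
  intro x y hx hy
  set p := fderiv ℝ σ x with hpdef
  set q := fderiv ℝ σ y with hqdef
  rcases eq_or_ne x y with rfl | hne
  · simp [Real.zero_rpow hα0.ne', hpdef, hqdef]
  have hd : 0 < ‖x - y‖ := norm_sub_pos_iff.2 hne
  rcases le_or_gt ‖x - y‖ 1 with hle | hgt
  · -- main case
    have key : ∀ h : X, ‖h‖ = ‖x - y‖ → (q - p) h ≤ 2 * C * ‖x - y‖ ^ (1 + α) := by
      intro h hhn
      have h1 : σ y + q ((x - y) + h) ≤ σ (x + h) := by
        have := hsub y (x + h)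
        have he : x + h - y = (x - y) + h := by abel
        rwa [he] at this
      have h2 : σ (x + h) ≤ σ x + p h + C * ‖h‖ ^ (1 + α) := hup x h hx (by rw [hhn]; exact hle)
      have h3 : σ x ≤ σ y + q (x - y) + C * ‖x - y‖ ^ (1 + α) := by
        have := hup y (x - y) hy hle
        have he : y + (x - y) = x := by abel
        rwa [he] at this
      have hq : q ((x - y) + h) = q (x - y) + q h := map_add q _ _
      have hsubpq : (q - p) h = q h - p h := by simp
      rw [hsubpq, hhn] at *
      rw [hq] at h1
      linarith
    have hnorm : ‖q - p‖ ≤ 2 * C * ‖x - y‖ ^ α := by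
      apply ContinuousLinearMap.opNorm_le_bound _ (by positivity)
      intro u
      rcases eq_or_ne u 0 with rfl | hu
      · simp
      have hun : 0 < ‖u‖ := norm_pos_iff.2 hu
      set h := (‖x - y‖ / ‖u‖) • u with hhdef
      have hhn : ‖h‖ = ‖x - y‖ := by
        rw [hhdef, norm_smul, Real.norm_eq_abs, abs_of_pos (by positivity)]
        field_simp
      have k1 := key h hhn
      have k2 := key (-h) (by rw [norm_neg]; exact hhn)
      have hval : (q - p) h = (‖x - y‖ / ‖u‖) * ((q - p) u) := by
        rw [hhdef, map_smul]; simp [smul_eq_mul]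
      have hval2 : (q - p) (-h) = -((‖x - y‖ / ‖u‖) * ((q - p) u)) := by
        rw [map_neg, hval]
      have habs : |(‖x - y‖ / ‖u‖) * ((q - p) u)| ≤ 2 * C * ‖x - y‖ ^ (1 + α) := by
        rw [abs_le]
        constructor
        · rw [hval2] at k2; linarith
        · rw [hval] at k1; linarith
      have habs2 : (‖x - y‖ / ‖u‖) * |(q - p) u| ≤ 2 * C * ‖x - y‖ ^ (1 + α) := by
        have heq : (‖x - y‖ / ‖u‖) * |(q - p) u| = |(‖x - y‖ / ‖u‖) * ((q - p) u)| := by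
          rw [abs_mul, abs_of_pos (by positivity : (0:ℝ) < ‖x - y‖ / ‖u‖)]
        rw [heq]; exact habs
      have hsplit : ‖x - y‖ ^ (1 + α) = ‖x - y‖ * ‖x - y‖ ^ α := by
        rw [Real.rpow_add hd, Real.rpow_one]
      calc ‖(q - p) u‖ = |(q - p) u| := rfl
        _ ≤ 2 * C * ‖x - y‖ ^ (1 + α) * ‖u‖ / ‖x - y‖ := by
            rw [div_mul_eq_mul_div, div_le_iff₀ hun] at habs2
            rw [le_div_iff₀ hd]
            nlinarith [habs2]
        _ = 2 * C * ‖x - y‖ ^ α * ‖u‖ := by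
            rw [hsplit]; field_simp
    calc ‖p - q‖ = ‖q - p‖ := by rw [norm_sub_rev]
      _ ≤ 2 * C * ‖x - y‖ ^ α := hnorm
      _ ≤ (2 * C + 2 * ℓ) * ‖x - y‖ ^ α := by
          apply mul_le_mul_of_nonneg_right (by linarith)
            (Real.rpow_nonneg (norm_nonneg _) _)
  · -- far case
    have h1 : (1:ℝ) ≤ ‖x - y‖ ^ α := Real.one_le_rpow hgt.le hα0.le
    calc ‖p - q‖ ≤ ‖p‖ + ‖q‖ := norm_sub_le _ _
      _ ≤ 2 * ℓ := by
          have := hgradbd x hx; have := hgradbd y hy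
          rw [← hpdef, ← hqdef] at *
          linarith
      _ = 2 * ℓ * 1 := by ring
      _ ≤ (2 * C + 2 * ℓ) * ‖x - y‖ ^ α := by
          apply mul_le_mul (by linarith) h1 zero_le_one (by linarith)

end aux



section aux
variable {X : Type*} [NormedAddCommGroup X]

variable (K : X → X → ℝ) (f : X → EReal) (n : ℕ) (m : ℝ) (y₀ : X)
  (hK0 : ∀ x y : X, 0 ≤ K x y) (hm : ∀ y, (m : EReal) ≤ f y) (hy₀ : f y₀ ≠ ⊤)

include hK0 hm in
lemma aux_inf_lb : ∀ x, (m : EReal) ≤ infConvK K f n x := by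
  intro x
  refine le_iInf fun y => ?_
  calc (m : EReal) = m + (0 : EReal) := by simp
    _ ≤ f y + (((n : ℝ) * K x y : ℝ) : EReal) := by
        apply add_le_add (hm y)
        exact_mod_cast EReal.coe_nonneg.2 (mul_nonneg (Nat.cast_nonneg n) (hK0 x y))

include hK0 hm hy₀ in
lemma aux_inf_ne_bot : ∀ x, infConvK K f n x ≠ ⊥ := by
  intro x
  have := aux_inf_lb K f n m hK0 hm x
  exact fun h => by simp [h] at this

include hy₀ in
lemma aux_inf_ne_top : ∀ x, infConvK K f n x ≠ ⊤ := by
  intro x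
  have h1 : infConvK K f n x ≤ f y₀ + (((n : ℝ) * K x y₀ : ℝ) : EReal) := iInf_le _ y₀
  have h2 : f y₀ + (((n : ℝ) * K x y₀ : ℝ) : EReal) < ⊤ :=
    EReal.add_lt_top hy₀ (EReal.coe_ne_top _)
  exact (h1.trans_lt h2).ne

include hK0 hm hy₀ in
lemma aux_inf_toReal_lb : ∀ x, m ≤ (infConvK K f n x).toReal := by
  intro x
  have h1 := aux_inf_lb K f n m hK0 hm x
  have := EReal.toReal_le_toReal h1 (EReal.coe_ne_bot m) (aux_inf_ne_top K f n y₀ hy₀ x)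
  simpa using this

include hK0 hm hy₀ in
lemma aux_fy₀_real : f y₀ = ((f y₀).toReal : EReal) := by
  refine (EReal.coe_toReal hy₀ ?_).symm
  intro h
  have := hm y₀
  simp [h] at this

include hK0 hm hy₀ in
lemma aux_inf_toReal_ub : ∀ x, ∀ y : X, f y ≠ ⊤ →
    (infConvK K f n x).toReal ≤ (f y).toReal + (n : ℝ) * K x y := by
  intro x y hy
  have hyreal : f y = ((f y).toReal : EReal) := by
    refine (EReal.coe_toReal hy ?_).symm
    intro h; have := hm y; simp [h] at this
  have h1 : infConvK K f n x ≤ f y + (((n : ℝ) * K x y : ℝ) : EReal) := iInf_le _ y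
  rw [hyreal, ← EReal.coe_add] at h1
  have := EReal.toReal_le_toReal h1 (aux_inf_ne_bot K f n m y₀ hK0 hm hy₀ x)
    (EReal.coe_ne_top _)
  rwa [EReal.toReal_coe] at this

include hK0 hm hy₀ in
lemma aux_inf_approx : ∀ x, ∀ ε : ℝ, 0 < ε → ∃ y : X, f y ≠ ⊤ ∧
    (f y).toReal + (n : ℝ) * K x y ≤ (infConvK K f n x).toReal + ε := by
  intro x ε hε
  have hne_bot := aux_inf_ne_bot K f n m y₀ hK0 hm hy₀ x
  have hne_top := aux_inf_ne_top K f n y₀ hy₀ x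
  have hreal : infConvK K f n x = (((infConvK K f n x).toReal : ℝ) : EReal) :=
    (EReal.coe_toReal hne_top hne_bot).symm
  have hlt : infConvK K f n x < (((infConvK K f n x).toReal + ε : ℝ) : EReal) := by
    rw [hreal]
    exact_mod_cast EReal.coe_lt_coe_iff.2 (by simp; linarith)
  rw [infConvK, iInf_lt_iff] at hlt
  obtain ⟨y, hy⟩ := hlt
  have hytop : f y ≠ ⊤ := by
    intro h
    rw [h, EReal.top_add_of_ne_bot (EReal.coe_ne_bot _)] at hy
    exact not_top_lt hy
  have hybot : f y ≠ ⊥ := by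
    intro h; have := hm y; simp [h] at this
  refine ⟨y, hytop, ?_⟩
  rw [(EReal.coe_toReal hytop hybot).symm, ← EReal.coe_add] at hy
  exact_mod_cast (EReal.coe_lt_coe_iff.1 hy).le

end aux


section aux
variable {X : Type*} [NormedAddCommGroup X] [NormedSpace ℝ X]

/-- `K (·, y₀)` is bounded above on balls, by uniform continuity on bounded sets. -/
lemma aux_K_bound (K : X → X → ℝ)
    (hK4 : ∀ s : Set (X × X), Bornology.IsBounded s →
      UniformContinuousOn (fun q : X × X => K q.1 q.2) s)
    (y₀ : X) (ρ : ℝ) (hρ : 0 < ρ) :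
    ∃ B : ℝ, ∀ z : X, ‖z‖ ≤ ρ → K z y₀ ≤ B := by
  set S : Set (X × X) := (Metric.closedBall (0:X) ρ) ×ˢ ({y₀} : Set X) with hSdef
  have hSb : Bornology.IsBounded S :=
    (Metric.isBounded_closedBall).prod (Bornology.isBounded_singleton)
  have huc := hK4 S hSb
  rw [Metric.uniformContinuousOn_iff] at huc
  obtain ⟨δ, hδ, hδb⟩ := huc 1 one_pos
  set N : ℕ := ⌈ρ / δ⌉₊ + 1 with hNdef
  have hN0 : 0 < (N : ℝ) := by positivity
  have hNδ : ρ / (N : ℝ) < δ := by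
    rw [div_lt_iff₀ hN0]
    have h1 : ρ / δ < (N : ℝ) := by
      calc ρ / δ ≤ (⌈ρ / δ⌉₊ : ℝ) := Nat.le_ceil _
        _ < (N : ℝ) := by rw [hNdef]; push_cast; linarith
    calc ρ = (ρ / δ) * δ := by field_simp
      _ < (N : ℝ) * δ := by exact mul_lt_mul_of_pos_right h1 hδ
      _ = δ * N := by ring
  refine ⟨K 0 y₀ + N, fun z hz => ?_⟩
  have hmem : ∀ k : ℕ, k ≤ N → (((k : ℝ) / N) • z, y₀) ∈ S := by
    intro k hk
    constructor
    · rw [Metric.mem_closedBall, dist_zero_right, norm_smul, Real.norm_eq_abs,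
        abs_of_nonneg (by positivity)]
      have hk1 : (k : ℝ) / N ≤ 1 := by
        rw [div_le_one hN0]; exact_mod_cast hk
      calc (k : ℝ) / N * ‖z‖ ≤ 1 * ρ := by
            apply mul_le_mul hk1 hz (norm_nonneg _) zero_le_one
        _ = ρ := one_mul ρ
    · rfl
  have key : ∀ k : ℕ, k ≤ N → K (((k : ℝ) / N) • z) y₀ ≤ K 0 y₀ + k := by
    intro k
    induction k with
    | zero => intro _; simp
    | succ j ih =>
      intro hj
      have hjN : j ≤ N := by omega
      have hjle := ih hjN
      have hd : dist ((((j+1 : ℕ) : ℝ) / N) • z, y₀) ((((j : ℕ) : ℝ) / N) • z, y₀) < δ := by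
        rw [Prod.dist_eq]
        simp only [dist_self]
        rw [max_eq_left dist_nonneg, dist_eq_norm]
        have : (((j+1 : ℕ) : ℝ) / N) • z - (((j : ℕ) : ℝ) / N) • z = ((1 : ℝ) / N) • z := by
          rw [← sub_smul]
          congr 1
          push_cast
          ring
        rw [this, norm_smul, Real.norm_eq_abs, abs_of_nonneg (by positivity)]
        calc 1 / (N : ℝ) * ‖z‖ ≤ 1 / (N : ℝ) * ρ := by
              apply mul_le_mul_of_nonneg_left hz (by positivity)
          _ = ρ / N := by ring
          _ < δ := hNδ
      have := hδb _ (hmem (j+1) hj) _ (hmem j hjN) hd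
      rw [Real.dist_eq] at this
      have habs := (abs_lt.1 this).2
      push_cast
      push_cast at hjle habs
      linarith
  have := key N le_rfl
  rw [div_self hN0.ne', one_smul] at this
  linarith

end aux


section aux
variable {X : Type*} [NormedAddCommGroup X] [NormedSpace ℝ X]

/-- The second difference of the inf-convolution plus `n c_K` is controlled by the second
difference of `2 n c_K`. -/
lemma aux_g_secdiff (K : X → X → ℝ) (cK : X → ℝ) (dK : X → X → ℝ)
    (I : X → ℝ) (fv : X → ℝ) (P : X → Prop) (n : ℕ)
    (hK5a : ∀ x y : X, K x y = cK x - dK x y)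
    (hK5c : ∀ y : X, ConvexOn ℝ Set.univ (fun x => dK x y))
    (hub : ∀ x y : X, P y → I x ≤ fv y + (n : ℝ) * K x y)
    (happrox : ∀ (x : X) (ε : ℝ), 0 < ε → ∃ y, P y ∧ fv y + (n : ℝ) * K x y ≤ I x + ε) :
    ∀ z h : X, (I (z+h) + (n : ℝ) * cK (z+h)) + (I (z-h) + (n : ℝ) * cK (z-h))
      - 2 * (I z + (n : ℝ) * cK z)
      ≤ 2 * (n : ℝ) * (cK (z+h) + cK (z-h) - 2 * cK z) := by
  intro z h
  refine le_of_forall_pos_le_add fun ε hε => ?_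
  obtain ⟨y, hy, hyv⟩ := happrox z (ε/2) (by linarith)
  have h1 := hub (z+h) y hy
  have h2 := hub (z-h) y hy
  have hdconv : dK z y ≤ (1/2) * dK (z+h) y + (1/2) * dK (z-h) y := by
    have hc := (hK5c y).2 (Set.mem_univ (z+h)) (Set.mem_univ (z-h))
      (by norm_num : (0:ℝ) ≤ 1/2) (by norm_num : (0:ℝ) ≤ 1/2)
      (by norm_num : (1/2 : ℝ) + 1/2 = 1)
    have hmid : (1/2 : ℝ) • (z+h) + (1/2 : ℝ) • (z-h) = z := by module
    rw [hmid] at hc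
    simpa [smul_eq_mul] using hc
  have hKiden : K (z+h) y + K (z-h) y - 2 * K z y ≤ cK (z+h) + cK (z-h) - 2 * cK z := by
    rw [hK5a, hK5a, hK5a]; linarith
  have hn : (0:ℝ) ≤ (n : ℝ) := Nat.cast_nonneg n
  have hmul := mul_le_mul_of_nonneg_left hKiden hn
  linarith

end aux



section aux
variable {X : Type*} [NormedAddCommGroup X] [NormedSpace ℝ X]
variable (g b : X → ℝ)

lemma aux_env_mem_ge (hb : ConvexOn ℝ Set.univ b) (hbg : ∀ z, b z ≤ g z) (x : X) :
    ∀ r ∈ { r : ℝ | ∃ (m : ℕ) (l : Fin m → ℝ) (z : Fin m → X),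
      (∀ i, 0 < l i) ∧ ∑ i, l i = 1 ∧ ∑ i, l i • z i = x ∧ ∑ i, l i * g (z i) = r },
      b x ≤ r := by
  rintro r ⟨m, l, z, hpos, hsum, hbar, hval⟩
  have h1 : b x ≤ ∑ i, l i * b (z i) := by
    rw [← hbar]
    have := hb.map_sum_le (t := Finset.univ) (w := l) (p := z)
      (fun i _ => (hpos i).le) hsum (fun i _ => Set.mem_univ _)
    simpa [smul_eq_mul] using this
  have h2 : ∑ i, l i * b (z i) ≤ ∑ i, l i * g (z i) :=
    Finset.sum_le_sum fun i _ => mul_le_mul_of_nonneg_left (hbg (z i)) (hpos i).le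
  linarith [hval ▸ h2]

lemma aux_env_self_mem (x : X) :
    g x ∈ { r : ℝ | ∃ (m : ℕ) (l : Fin m → ℝ) (z : Fin m → X),
      (∀ i, 0 < l i) ∧ ∑ i, l i = 1 ∧ ∑ i, l i • z i = x ∧ ∑ i, l i * g (z i) = r } :=
  ⟨1, fun _ => 1, fun _ => x, fun _ => one_pos, by simp, by simp, by simp⟩

lemma aux_env_bddBelow (hb : ConvexOn ℝ Set.univ b) (hbg : ∀ z, b z ≤ g z) (x : X) :
    BddBelow { r : ℝ | ∃ (m : ℕ) (l : Fin m → ℝ) (z : Fin m → X),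
      (∀ i, 0 < l i) ∧ ∑ i, l i = 1 ∧ ∑ i, l i • z i = x ∧ ∑ i, l i * g (z i) = r } :=
  ⟨b x, fun r hr => aux_env_mem_ge g b hb hbg x r hr⟩

lemma aux_le_convEnv (hb : ConvexOn ℝ Set.univ b) (hbg : ∀ z, b z ≤ g z) (x : X) :
    b x ≤ convEnv g x :=
  le_csInf ⟨g x, aux_env_self_mem g x⟩ (aux_env_mem_ge g b hb hbg x)

lemma aux_convEnv_le_combo (hb : ConvexOn ℝ Set.univ b) (hbg : ∀ z, b z ≤ g z)
    {mm : ℕ} (l : Fin mm → ℝ) (z : Fin mm → X) (hpos : ∀ i, 0 < l i)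
    (hsum : ∑ i, l i = 1) :
    convEnv g (∑ i, l i • z i) ≤ ∑ i, l i * g (z i) :=
  csInf_le (aux_env_bddBelow g b hb hbg _) ⟨mm, l, z, hpos, hsum, rfl, rfl⟩

lemma aux_convEnv_le_g (hb : ConvexOn ℝ Set.univ b) (hbg : ∀ z, b z ≤ g z) (x : X) :
    convEnv g x ≤ g x :=
  csInf_le (aux_env_bddBelow g b hb hbg x) (aux_env_self_mem g x)

lemma aux_convEnv_exists (hb : ConvexOn ℝ Set.univ b) (hbg : ∀ z, b z ≤ g z) (x : X)
    (ε : ℝ) (hε : 0 < ε) :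
    ∃ (mm : ℕ) (l : Fin mm → ℝ) (z : Fin mm → X),
      (∀ i, 0 < l i) ∧ ∑ i, l i = 1 ∧ ∑ i, l i • z i = x ∧
      ∑ i, l i * g (z i) ≤ convEnv g x + ε := by
  obtain ⟨r, hrmem, hrlt⟩ := Real.lt_sInf_add_pos ⟨g x, aux_env_self_mem g x⟩ hε
  obtain ⟨mm, l, z, hpos, hsum, hbar, hval⟩ := hrmem
  exact ⟨mm, l, z, hpos, hsum, hbar, by rw [hval]; exact hrlt.le⟩

lemma aux_convEnv_convexOn (hb : ConvexOn ℝ Set.univ b) (hbg : ∀ z, b z ≤ g z) :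
    ConvexOn ℝ Set.univ (convEnv g) := by
  refine ⟨convex_univ, fun x _ y _ a c ha hc hac => ?_⟩
  rcases eq_or_lt_of_le ha with ha0 | ha'
  · have hc1 : c = 1 := by linarith
    simp [← ha0, hc1]
  rcases eq_or_lt_of_le hc with hc0 | hc'
  · have ha1 : a = 1 := by linarith
    simp [← hc0, ha1]
  rw [smul_eq_mul, smul_eq_mul]
  refine le_of_forall_pos_le_add fun ε hε => ?_
  obtain ⟨m₁, l₁, z₁, hpos₁, hsum₁, hbar₁, hval₁⟩ :=
    aux_convEnv_exists g b hb hbg x ε hε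
  obtain ⟨m₂, l₂, z₂, hpos₂, hsum₂, hbar₂, hval₂⟩ :=
    aux_convEnv_exists g b hb hbg y ε hε
  set l : Fin (m₁ + m₂) → ℝ := Fin.append (fun i => a * l₁ i) (fun j => c * l₂ j) with hldef
  set z : Fin (m₁ + m₂) → X := Fin.append z₁ z₂ with hzdef
  have hpos : ∀ i, 0 < l i := by
    intro i
    refine Fin.addCases (fun i => ?_) (fun j => ?_) i
    · rw [hldef, Fin.append_left]; exact mul_pos ha' (hpos₁ i)
    · rw [hldef, Fin.append_right]; exact mul_pos hc' (hpos₂ j)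
  have hsum : ∑ i, l i = 1 := by
    rw [hldef, Fin.sum_univ_add]
    simp only [Fin.append_left, Fin.append_right]
    rw [← Finset.mul_sum, ← Finset.mul_sum, hsum₁, hsum₂]
    linarith
  have hbar : ∑ i, l i • z i = a • x + c • y := by
    rw [hldef, hzdef, Fin.sum_univ_add]
    simp only [Fin.append_left, Fin.append_right]
    have e1 : ∀ i, (a * l₁ i) • z₁ i = a • (l₁ i • z₁ i) := fun i => by
      rw [smul_smul]
    have e2 : ∀ j, (c * l₂ j) • z₂ j = c • (l₂ j • z₂ j) := fun j => by
      rw [smul_smul]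
    simp only [e1, e2, ← Finset.smul_sum, hbar₁, hbar₂]
  have hval : ∑ i, l i * g (z i) = a * (∑ i, l₁ i * g (z₁ i)) + c * (∑ i, l₂ i * g (z₂ i)) := by
    rw [hldef, hzdef, Fin.sum_univ_add]
    simp only [Fin.append_left, Fin.append_right, mul_assoc]
    rw [← Finset.mul_sum, ← Finset.mul_sum]
  have hle : convEnv g (a • x + c • y) ≤ ∑ i, l i * g (z i) := by
    have := aux_convEnv_le_combo g b hb hbg l z hpos hsum
    rwa [hbar] at this
  rw [hval] at hle
  calc convEnv g (a • x + c • y)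
      ≤ a * (∑ i, l₁ i * g (z₁ i)) + c * (∑ i, l₂ i * g (z₂ i)) := hle
    _ ≤ a * (convEnv g x + ε) + c * (convEnv g y + ε) := by
        apply add_le_add
        · exact mul_le_mul_of_nonneg_left hval₁ ha
        · exact mul_le_mul_of_nonneg_left hval₂ hc
    _ = a * convEnv g x + c * convEnv g y + ε := by
        have : a + c = 1 := hac
        nlinarith [this]

end aux


section aux
variable {X : Type*} [NormedAddCommGroup X] [NormedSpace ℝ X]

set_option maxHeartbeats 2000000 in
/-- Main estimate: the convex hull function `ψ` of `g` inherits a `C^{1,α}`-type second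
difference bound. -/
lemma aux_main_estimate (ψ g cK : X → ℝ) (n : ℕ) (m α : ℝ)
    (hα0 : 0 < α) (hn : 0 < n)
    (hcombo : ∀ (mm : ℕ) (l : Fin mm → ℝ) (z : Fin mm → X), (∀ i, 0 < l i) →
      (∑ i, l i = 1) → ψ (∑ i, l i • z i) ≤ ∑ i, l i * g (z i))
    (hexists : ∀ (x : X) (ε : ℝ), 0 < ε → ∃ (mm : ℕ) (l : Fin mm → ℝ) (z : Fin mm → X),
      (∀ i, 0 < l i) ∧ ∑ i, l i = 1 ∧ ∑ i, l i • z i = x ∧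
      ∑ i, l i * g (z i) ≤ ψ x + ε)
    (hψg : ∀ z, ψ z ≤ g z)
    (hψglb : ∀ z, m + (n : ℝ) * cK z ≤ ψ z)
    (hgglb : ∀ z, m + (n : ℝ) * cK z ≤ g z)
    (hsub : ∀ x : X, ∃ p : X →L[ℝ] ℝ, ∀ z, ψ x + p (z - x) ≤ ψ z)
    (hψlip : ∀ ρ : ℝ, 0 < ρ → ∃ ℓ : ℝ, 0 ≤ ℓ ∧ ∀ x y : X, ‖x‖ ≤ ρ → ‖y‖ ≤ ρ →
      ψ x - ψ y ≤ ℓ * ‖x - y‖)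
    (hgub : ∀ ρ : ℝ, 0 < ρ → ∃ G : ℝ, ∀ z : X, ‖z‖ ≤ ρ → g z ≤ G)
    (hlin : ∀ s : ℝ, 0 < s → ∃ C : ℝ, 0 ≤ C ∧ ∀ z : X, s * ‖z‖ - C ≤ cK z)
    (hsec : ∀ z h : X, g (z+h) + g (z-h) - 2 * g z ≤
      2 * (n : ℝ) * (cK (z+h) + cK (z-h) - 2 * cK z))
    (hck2 : ∀ ρ : ℝ, 0 < ρ → ∃ Lc : ℝ, 0 ≤ Lc ∧ ∀ z h : X, ‖z‖ ≤ ρ → ‖h‖ ≤ 1 →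
      cK (z+h) + cK (z-h) - 2 * cK z ≤ Lc * ‖h‖ ^ (1 + α)) :
    ∀ r : ℝ, 0 < r → ∃ Cψ : ℝ, 0 ≤ Cψ ∧ ∀ x h : X, ‖x‖ ≤ r → ‖h‖ ≤ 1 →
      ψ (x + h) + ψ (x - h) - 2 * ψ x ≤ Cψ * ‖h‖ ^ (1 + α) := by
  intro r hr
  -- Lipschitz constant of ψ on the ball of radius r + 2
  obtain ⟨ℓ, hℓ0, hℓ⟩ := hψlip (r + 2) (by linarith)
  -- linear lower bound of slope (ℓ+2)/n
  have hs' : 0 < (ℓ + 2) / (n : ℝ) := by positivity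
  obtain ⟨C', hC'0, hC'⟩ := hlin ((ℓ + 2) / (n : ℝ)) hs'
  have hnC' : ∀ z : X, (ℓ + 2) * ‖z‖ - (n : ℝ) * C' ≤ (n : ℝ) * cK z := by
    intro z
    have := hC' z
    have hn0 : (0:ℝ) < (n : ℝ) := by exact_mod_cast hn
    have := mul_le_mul_of_nonneg_left this hn0.le
    calc (ℓ + 2) * ‖z‖ - (n : ℝ) * C'
        = (n : ℝ) * ((ℓ + 2) / (n : ℝ) * ‖z‖ - C') := by field_simp
      _ ≤ (n : ℝ) * cK z := this
  set CC : ℝ := (n : ℝ) * C' + (ψ 0 + ℓ * r) + 2 * ℓ * r - m + 2 with hCCdef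
  set ρ : ℝ := max CC (r + 1) + 1 with hρdef
  have hρr : r + 2 ≤ ρ + 1 := by
    have := le_max_right CC (r + 1); rw [hρdef]; linarith
  have hρpos : 0 < ρ := by
    have := le_max_right CC (r + 1); rw [hρdef]; linarith
  obtain ⟨Lc, hLc0, hLc⟩ := hck2 ρ hρpos
  obtain ⟨Gg, hGg⟩ := hgub (r + 1) (by linarith)
  set glow : ℝ := m - (n : ℝ) * C' with hglowdef
  have hglow : ∀ z : X, glow ≤ g z := by
    intro z
    have h1 := hgglb z
    have h2 := hnC' z
    have : (0:ℝ) ≤ (ℓ + 2) * ‖z‖ := by positivity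
    rw [hglowdef]; linarith
  set c₃ : ℝ := 1 + max 0 (Gg - glow) with hc₃def
  have hc₃0 : 1 ≤ c₃ := by rw [hc₃def]; have := le_max_left 0 (Gg - glow); linarith
  refine ⟨2 * (n : ℝ) * Lc + 2 * ℓ + c₃, by positivity, fun x h hx hh => ?_⟩
  rcases eq_or_ne h 0 with rfl | hne
  · have h0 : (0:ℝ) ≤ (2 * (n : ℝ) * Lc + 2 * ℓ + c₃) * ‖(0:X)‖ ^ (1 + α) :=
      mul_nonneg (by positivity) (Real.rpow_nonneg (norm_nonneg _) _)
    simp only [add_zero, sub_zero]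
    linarith
  -- set up epsilons
  set εu : ℝ := ‖h‖ ^ (1 + α) with hεudef
  have hεupos : 0 < εu := Real.rpow_pos_of_pos (norm_pos_iff.2 hne) _
  have hεu1 : εu ≤ 1 := Real.rpow_le_one (norm_nonneg _) hh (by linarith)
  set ε₀ : ℝ := εu / (2 * (1 + r)) with hε₀def
  have hε₀pos : 0 < ε₀ := by rw [hε₀def]; positivity
  have hdiv : εu / (2 * (1 + r)) ≤ εu / 2 := by
    apply div_le_div_of_nonneg_left hεupos.le two_pos
    linarith
  have hε₀half : ε₀ ≤ 1 / 2 := by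
    rw [hε₀def]; linarith
  have hε₀εu : ε₀ * (1 + r) = εu / 2 := by rw [hε₀def]; field_simp
  -- the ε₀-optimal combination
  obtain ⟨mm, l, z, hpos, hsum1, hbar, hval⟩ := hexists x ε₀ hε₀pos
  -- subgradient at x
  obtain ⟨p, hp⟩ := hsub x
  -- bound on p
  have hψx0 : ψ x - ψ 0 ≤ ℓ * ‖x‖ := by
    have := hℓ x 0 (by linarith) (by simp; linarith)
    simpa using this
  have hpbound : ∀ u : X, p u ≤ ℓ * ‖u‖ := by
    intro u
    rcases eq_or_ne u 0 with rfl | hu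
    · simp
    have hun : 0 < ‖u‖ := norm_pos_iff.2 hu
    set v := (‖u‖⁻¹) • u with hvdef
    have hvn : ‖v‖ = 1 := by
      rw [hvdef, norm_smul, Real.norm_eq_abs, abs_of_pos (by positivity)]
      field_simp
    have h1 : ψ x + p (x + v - x) ≤ ψ (x + v) := hp (x + v)
    have h2 : x + v - x = v := by abel
    rw [h2] at h1
    have h3 : ψ (x + v) - ψ x ≤ ℓ * ‖v‖ := by
      have hxv : ‖x + v‖ ≤ r + 2 := by
        calc ‖x + v‖ ≤ ‖x‖ + ‖v‖ := norm_add_le _ _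
          _ ≤ r + 2 := by rw [hvn]; linarith
      have := hℓ (x + v) x hxv (by linarith)
      have he : x + v - x = v := by abel
      rwa [he] at this
    have h4 : p v ≤ ℓ := by rw [hvn] at h3; linarith
    have h5 : p u = ‖u‖ * p v := by
      rw [hvdef, map_smul, smul_eq_mul]
      field_simp
    rw [h5]
    calc ‖u‖ * p v ≤ ‖u‖ * ℓ := mul_le_mul_of_nonneg_left h4 hun.le
      _ = ℓ * ‖u‖ := mul_comm _ _
  -- Bregman distances
  set D : Fin mm → ℝ := fun i => ψ (z i) - ψ x - p (z i - x) with hDdef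
  have hD0 : ∀ i, 0 ≤ D i := by
    intro i
    have := hp (z i)
    rw [hDdef]; dsimp only; linarith
  have hpsum : ∑ i, l i * p (z i - x) = 0 := by
    have e1 : ∀ i, l i * p (z i - x) = p (l i • (z i - x)) := by
      intro i; rw [map_smul]; simp [smul_eq_mul]
    rw [Finset.sum_congr rfl (fun i _ => e1 i), ← map_sum]
    have e2 : ∑ i, l i • (z i - x) = 0 := by
      have : ∀ i, l i • (z i - x) = l i • z i - l i • x := fun i => smul_sub _ _ _
      rw [Finset.sum_congr rfl (fun i _ => this i), Finset.sum_sub_distrib,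
        hbar, ← Finset.sum_smul, hsum1, one_smul, sub_self]
    rw [e2, map_zero]
  have hDsum : ∑ i, l i * D i ≤ ε₀ := by
    have e1 : ∑ i, l i * D i
        = ∑ i, l i * ψ (z i) - ψ x - ∑ i, l i * p (z i - x) := by
      rw [hDdef]
      have : ∀ i, l i * (ψ (z i) - ψ x - p (z i - x))
          = l i * ψ (z i) - l i * ψ x - l i * p (z i - x) := fun i => by ring
      rw [Finset.sum_congr rfl (fun i _ => this i), Finset.sum_sub_distrib,
        Finset.sum_sub_distrib, ← Finset.sum_mul, hsum1, one_mul]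
    have e2 : ∑ i, l i * ψ (z i) ≤ ∑ i, l i * g (z i) :=
      Finset.sum_le_sum fun i _ => mul_le_mul_of_nonneg_left (hψg (z i)) (hpos i).le
    rw [e1, hpsum]
    linarith
  -- the far set
  set S : Finset (Fin mm) := Finset.univ.filter (fun i => ρ < ‖z i‖) with hSdef
  have hfarD : ∀ i ∈ S, 1 ≤ D i ∧ ‖z i‖ ≤ D i := by
    intro i hi
    have hzi : ρ < ‖z i‖ := by
      rw [hSdef] at hi; exact (Finset.mem_filter.1 hi).2
    have h1 : p (z i - x) ≤ ℓ * ‖z i‖ + ℓ * r := by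
      calc p (z i - x) ≤ ℓ * ‖z i - x‖ := hpbound _
        _ ≤ ℓ * (‖z i‖ + r) := by
            apply mul_le_mul_of_nonneg_left _ hℓ0
            calc ‖z i - x‖ ≤ ‖z i‖ + ‖x‖ := norm_sub_le _ _
              _ ≤ ‖z i‖ + r := by linarith
        _ = ℓ * ‖z i‖ + ℓ * r := by ring
    have h2 : ψ x ≤ ψ 0 + ℓ * r := by
      have : ℓ * ‖x‖ ≤ ℓ * r := mul_le_mul_of_nonneg_left hx hℓ0
      linarith
    have h3 := hψglb (z i)
    have h4 := hnC' (z i)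
    have hlr : 0 ≤ ℓ * r := mul_nonneg hℓ0 hr.le
    have hD : 2 * ‖z i‖ - (CC - 2) ≤ D i := by
      rw [hDdef, hCCdef]; dsimp only; linarith
    have hCCz : CC ≤ ‖z i‖ := by
      have h5 : CC ≤ max CC (r + 1) := le_max_left _ _
      rw [hρdef] at hzi; linarith
    have hz1 : r + 2 ≤ ‖z i‖ := by
      have h5 : r + 1 ≤ max CC (r + 1) := le_max_right _ _
      rw [hρdef] at hzi; linarith
    constructor
    · nlinarith
    · nlinarith
  set μ : ℝ := ∑ i ∈ S, l i with hμdef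
  set ν : ℝ := ∑ i ∈ S, l i * ‖z i‖ with hνdef
  have hμ0 : 0 ≤ μ := Finset.sum_nonneg fun i _ => (hpos i).le
  have hDS : ∑ i ∈ S, l i * D i ≤ ε₀ := by
    refine le_trans ?_ hDsum
    apply Finset.sum_le_sum_of_subset_of_nonneg (Finset.subset_univ S)
    intro i _ _
    exact mul_nonneg (hpos i).le (hD0 i)
  have hμ : μ ≤ ε₀ := by
    refine le_trans ?_ hDS
    rw [hμdef]
    refine Finset.sum_le_sum fun i hi => ?_
    have h1 := (hfarD i hi).1
    calc l i = l i * 1 := by ring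
      _ ≤ l i * D i := mul_le_mul_of_nonneg_left h1 (hpos i).le
  have hν : ν ≤ ε₀ := by
    refine le_trans ?_ hDS
    rw [hνdef]
    refine Finset.sum_le_sum fun i hi => ?_
    exact mul_le_mul_of_nonneg_left (hfarD i hi).2 (hpos i).le
  have hμhalf : μ ≤ 1 / 2 := le_trans hμ hε₀half
  have h1μ : (1:ℝ) / 2 ≤ 1 - μ := by linarith
  have h1μpos : 0 < 1 - μ := by linarith
  -- the replacement point x'
  set w : X := ∑ i ∈ S, l i • z i with hwdef
  set x' : X := (1 - μ)⁻¹ • (x - w) with hx'def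
  have hx'eq : (1 - μ) • x' = x - w := by
    rw [hx'def, smul_smul, mul_inv_cancel₀ h1μpos.ne', one_smul]
  have hwnorm : ‖w‖ ≤ ν := by
    rw [hwdef, hνdef]
    calc ‖∑ i ∈ S, l i • z i‖ ≤ ∑ i ∈ S, ‖l i • z i‖ := norm_sum_le _ _
      _ = ∑ i ∈ S, l i * ‖z i‖ := by
          refine Finset.sum_congr rfl fun i _ => ?_
          rw [norm_smul, Real.norm_eq_abs, abs_of_pos (hpos i)]
  have hxx' : ‖x - x'‖ ≤ εu := by
    have e1 : (1 - μ) • (x - x') = w - μ • x := by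
      rw [smul_sub, hx'eq, sub_smul, one_smul]; abel
    have e2 : ‖w - μ • x‖ ≤ εu / 2 := by
      calc ‖w - μ • x‖ ≤ ‖w‖ + ‖μ • x‖ := norm_sub_le _ _
        _ ≤ ν + μ * r := by
            have : ‖μ • x‖ = μ * ‖x‖ := by
              rw [norm_smul, Real.norm_eq_abs, abs_of_nonneg hμ0]
            rw [this]
            have : μ * ‖x‖ ≤ μ * r := mul_le_mul_of_nonneg_left hx hμ0
            linarith
        _ ≤ ε₀ + ε₀ * r := by nlinarith
        _ = εu / 2 := by rw [← hε₀εu]; ring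
    have e3 : ‖(1 - μ) • (x - x')‖ = (1 - μ) * ‖x - x'‖ := by
      rw [norm_smul, Real.norm_eq_abs, abs_of_pos h1μpos]
    have e4 : (1 - μ) * ‖x - x'‖ ≤ εu / 2 := by rw [← e3, e1]; exact e2
    nlinarith [norm_nonneg (x - x')]
  have hx'norm : ‖x'‖ ≤ r + 1 := by
    calc ‖x'‖ = ‖x - (x - x')‖ := by congr 1; abel
      _ ≤ ‖x‖ + ‖x - x'‖ := norm_sub_le _ _
      _ ≤ r + 1 := by linarith
  -- modified points
  set z' : Fin mm → X := fun i => if ρ < ‖z i‖ then x' else z i with hz'def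
  have hz'S : ∀ i ∈ S, z' i = x' := by
    intro i hi
    rw [hSdef] at hi
    rw [hz'def]; simp only [if_pos (Finset.mem_filter.1 hi).2]
  have hz'nS : ∀ i ∈ Finset.univ.filter (fun i => ¬ (ρ < ‖z i‖)), z' i = z i := by
    intro i hi
    rw [hz'def]; simp only [if_neg (Finset.mem_filter.1 hi).2]
  have hz'bound : ∀ i, ‖z' i‖ ≤ ρ := by
    intro i
    by_cases hc : ρ < ‖z i‖
    · have he : z' i = x' := by rw [hz'def]; simp only [if_pos hc]
      rw [he]; linarith
    · have he : z' i = z i := by rw [hz'def]; simp only [if_neg hc]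
      rw [he]; linarith [not_lt.1 hc]
  -- barycenter of modified combination
  have hsplit : ∀ F : Fin mm → X, ∑ i, F i = ∑ i ∈ S, F i +
      ∑ i ∈ Finset.univ.filter (fun i => ¬ (ρ < ‖z i‖)), F i := by
    intro F
    rw [hSdef, Finset.sum_filter_add_sum_filter_not]
  have hsplitR : ∀ F : Fin mm → ℝ, ∑ i, F i = ∑ i ∈ S, F i +
      ∑ i ∈ Finset.univ.filter (fun i => ¬ (ρ < ‖z i‖)), F i := by
    intro F
    rw [hSdef, Finset.sum_filter_add_sum_filter_not]
  have hbar' : ∑ i, l i • z' i = x' := by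
    rw [hsplit (fun i => l i • z' i)]
    have e1 : ∑ i ∈ S, l i • z' i = μ • x' := by
      rw [hμdef, Finset.sum_smul]
      exact Finset.sum_congr rfl fun i hi => by rw [hz'S i hi]
    have e2 : ∑ i ∈ Finset.univ.filter (fun i => ¬ (ρ < ‖z i‖)), l i • z' i
        = x - w := by
      have e3 : ∑ i ∈ Finset.univ.filter (fun i => ¬ (ρ < ‖z i‖)), l i • z' i
          = ∑ i ∈ Finset.univ.filter (fun i => ¬ (ρ < ‖z i‖)), l i • z i :=
        Finset.sum_congr rfl fun i hi => by rw [hz'nS i hi]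
      have e4 := hsplit (fun i => l i • z i)
      rw [hbar, ← hwdef] at e4
      rw [e3, e4]; abel
    rw [e1, e2, ← hx'eq, ← add_smul]
    norm_num
  -- value of the modified combination
  set W : ℝ := ∑ i, l i * g (z' i) with hWdef
  have hW : W ≤ ψ x + c₃ * ε₀ := by
    have hWsplit : W = (∑ i ∈ Finset.univ.filter (fun i => ¬ (ρ < ‖z i‖)),
        l i * g (z i)) + μ * g x' := by
      rw [hWdef, hsplitR (fun i => l i * g (z' i))]
      have e1 : ∑ i ∈ S, l i * g (z' i) = μ * g x' := by
        rw [hμdef, Finset.sum_mul]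
        exact Finset.sum_congr rfl fun i hi => by rw [hz'S i hi]
      have e2 : ∑ i ∈ Finset.univ.filter (fun i => ¬ (ρ < ‖z i‖)), l i * g (z' i)
          = ∑ i ∈ Finset.univ.filter (fun i => ¬ (ρ < ‖z i‖)), l i * g (z i) :=
        Finset.sum_congr rfl fun i hi => by rw [hz'nS i hi]
      rw [e1, e2]; ring
    have hSg : μ * glow ≤ ∑ i ∈ S, l i * g (z i) := by
      rw [hμdef, Finset.sum_mul]
      exact Finset.sum_le_sum fun i _ =>
        mul_le_mul_of_nonneg_left (hglow (z i)) (hpos i).le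
    have hnSg : ∑ i ∈ Finset.univ.filter (fun i => ¬ (ρ < ‖z i‖)), l i * g (z i)
        ≤ ψ x + ε₀ - μ * glow := by
      have e4 := hsplitR (fun i => l i * g (z i))
      linarith [hval]
    have hgx' : g x' ≤ Gg := hGg x' hx'norm
    have hμg : μ * g x' ≤ μ * Gg := mul_le_mul_of_nonneg_left hgx' hμ0
    have hmax : μ * (Gg - glow) ≤ ε₀ * max 0 (Gg - glow) := by
      rcases le_or_gt (Gg - glow) 0 with hc | hc
      · have h1 : μ * (Gg - glow) ≤ 0 := mul_nonpos_of_nonneg_of_nonpos hμ0 hc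
        have h2 : 0 ≤ ε₀ * max 0 (Gg - glow) :=
          mul_nonneg hε₀pos.le (le_max_left _ _)
        linarith
      · have h1 : μ * (Gg - glow) ≤ ε₀ * (Gg - glow) :=
          mul_le_mul_of_nonneg_right hμ hc.le
        have h2 : max 0 (Gg - glow) = Gg - glow := max_eq_right hc.le
        rw [h2]; exact h1
    have hexp : μ * Gg - μ * glow = μ * (Gg - glow) := by ring
    have hc₃e : c₃ * ε₀ = ε₀ + ε₀ * max 0 (Gg - glow) := by rw [hc₃def]; ring
    rw [hWsplit]
    linarith
  -- second differences of g at the modified points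
  have hsec' : ∀ i, g (z' i + h) + g (z' i - h) - 2 * g (z' i)
      ≤ 2 * (n:ℝ) * Lc * εu := by
    intro i
    have h1 := hsec (z' i) h
    have h2 := hLc (z' i) h (hz'bound i) hh
    have h3 : 2 * (n:ℝ) * (cK (z' i + h) + cK (z' i - h) - 2 * cK (z' i))
        ≤ 2 * (n:ℝ) * (Lc * ‖h‖ ^ (1 + α)) :=
      mul_le_mul_of_nonneg_left h2 (by positivity)
    rw [hεudef]
    linarith
  -- combinations at x' ± h
  have hcombo_shift : ∀ u : X, ψ (x' + u) ≤ ∑ i, l i * g (z' i + u) := by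
    intro u
    have hc := hcombo mm l (fun i => z' i + u) hpos hsum1
    have hbs : ∑ i, l i • (z' i + u) = x' + u := by
      have e : ∀ i, l i • (z' i + u) = l i • z' i + l i • u := fun i => smul_add _ _ _
      rw [Finset.sum_congr rfl (fun i _ => e i), Finset.sum_add_distrib, hbar',
        ← Finset.sum_smul, hsum1, one_smul]
    rwa [hbs] at hc
  have hlip1 : ψ (x + h) ≤ ψ (x' + h) + ℓ * εu := by
    have hb1 : ‖x + h‖ ≤ r + 2 := by
      calc ‖x + h‖ ≤ ‖x‖ + ‖h‖ := norm_add_le _ _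
        _ ≤ r + 2 := by linarith
    have hb2 : ‖x' + h‖ ≤ r + 2 := by
      calc ‖x' + h‖ ≤ ‖x'‖ + ‖h‖ := norm_add_le _ _
        _ ≤ r + 2 := by linarith
    have := hℓ (x + h) (x' + h) hb1 hb2
    have he : (x + h) - (x' + h) = x - x' := by abel
    rw [he] at this
    have h2 : ℓ * ‖x - x'‖ ≤ ℓ * εu := mul_le_mul_of_nonneg_left hxx' hℓ0
    linarith
  have hlip2 : ψ (x - h) ≤ ψ (x' - h) + ℓ * εu := by
    have hb1 : ‖x - h‖ ≤ r + 2 := by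
      calc ‖x - h‖ ≤ ‖x‖ + ‖h‖ := norm_sub_le _ _
        _ ≤ r + 2 := by linarith
    have hb2 : ‖x' - h‖ ≤ r + 2 := by
      calc ‖x' - h‖ ≤ ‖x'‖ + ‖h‖ := norm_sub_le _ _
        _ ≤ r + 2 := by linarith
    have := hℓ (x - h) (x' - h) hb1 hb2
    have he : (x - h) - (x' - h) = x - x' := by abel
    rw [he] at this
    have h2 : ℓ * ‖x - x'‖ ≤ ℓ * εu := mul_le_mul_of_nonneg_left hxx' hℓ0
    linarith
  -- sum of second differences
  have hsum_sec : ∑ i, l i * (g (z' i + h) + g (z' i - h) - 2 * g (z' i))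
      ≤ 2 * (n:ℝ) * Lc * εu := by
    calc ∑ i, l i * (g (z' i + h) + g (z' i - h) - 2 * g (z' i))
        ≤ ∑ i, l i * (2 * (n:ℝ) * Lc * εu) :=
          Finset.sum_le_sum fun i _ =>
            mul_le_mul_of_nonneg_left (hsec' i) (hpos i).le
      _ = 2 * (n:ℝ) * Lc * εu := by
          rw [← Finset.sum_mul, hsum1, one_mul]
  have hψ'sum : ψ (x' + h) + ψ (x' - h) ≤ 2 * W + 2 * (n:ℝ) * Lc * εu := by
    have h1 := hcombo_shift h
    have h2 := hcombo_shift (-h)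
    have he1 : x' + (-h) = x' - h := by abel
    have he2 : ∀ i, z' i + (-h) = z' i - h := fun i => by abel
    rw [he1, Finset.sum_congr rfl (fun i _ => by rw [he2 i])] at h2
    have e : ∑ i, l i * g (z' i + h) + ∑ i, l i * g (z' i - h)
        = ∑ i, l i * (g (z' i + h) + g (z' i - h) - 2 * g (z' i)) + 2 * W := by
      rw [hWdef]
      have e1 : ∀ i, l i * (g (z' i + h) + g (z' i - h) - 2 * g (z' i))
          = l i * g (z' i + h) + l i * g (z' i - h) - 2 * (l i * g (z' i)) :=
        fun i => by ring
      rw [Finset.sum_congr rfl (fun i _ => e1 i), Finset.sum_sub_distrib,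
        Finset.sum_add_distrib, ← Finset.mul_sum]
      ring
    linarith
  -- final assembly
  have hε₀le : 2 * ε₀ ≤ εu := by
    rw [hε₀def]; linarith
  calc ψ (x + h) + ψ (x - h) - 2 * ψ x
      ≤ (ψ (x' + h) + ℓ * εu) + (ψ (x' - h) + ℓ * εu) - 2 * ψ x := by
        linarith [hlip1, hlip2]
    _ ≤ (2 * W + 2 * (n:ℝ) * Lc * εu) + 2 * ℓ * εu - 2 * ψ x := by
        linarith [hψ'sum]
    _ ≤ (2 * (ψ x + c₃ * ε₀) + 2 * (n:ℝ) * Lc * εu) + 2 * ℓ * εu - 2 * ψ x := by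
        linarith [hW]
    _ = 2 * c₃ * ε₀ + (2 * (n:ℝ) * Lc + 2 * ℓ) * εu := by ring
    _ ≤ c₃ * εu + (2 * (n:ℝ) * Lc + 2 * ℓ) * εu := by
        have := mul_le_mul_of_nonneg_left hε₀le (by linarith : (0:ℝ) ≤ c₃)
        linarith
    _ = (2 * (n:ℝ) * Lc + 2 * ℓ + c₃) * εu := by ring
    _ = (2 * (n:ℝ) * Lc + 2 * ℓ + c₃) * ‖h‖ ^ (1 + α) := by rw [hεudef]

end aux


section aux
variable {X : Type*} [NormedAddCommGroup X] [NormedSpace ℝ X]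

/-- Second-difference bound for a function with locally Hölder derivative. -/
lemma aux_cksec (cK : X → ℝ) (α : ℝ) (hα0 : 0 < α)
    (hcdiff : Differentiable ℝ cK)
    (hchold : ∀ r : ℝ, 0 < r → ∃ L : ℝ, 0 < L ∧ ∀ x y : X, ‖x‖ ≤ r → ‖y‖ ≤ r →
      ‖fderiv ℝ cK x - fderiv ℝ cK y‖ ≤ L * ‖x - y‖ ^ α)
    (ρ : ℝ) (hρ : 0 < ρ) :
    ∃ Lc : ℝ, 0 ≤ Lc ∧ ∀ z h : X, ‖z‖ ≤ ρ → ‖h‖ ≤ 1 →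
      cK (z + h) + cK (z - h) - 2 * cK z ≤ Lc * ‖h‖ ^ (1 + α) := by
  obtain ⟨L, hL, hLb⟩ := hchold (ρ + 1) (by linarith)
  refine ⟨2 * L, by positivity, fun z h hz hh => ?_⟩
  have key : ∀ u : X, ‖u‖ ≤ 1 → cK (z + u) - cK z - fderiv ℝ cK z u ≤ L * ‖u‖ ^ (1 + α) := by
    intro u hu
    set F : X → ℝ := fun w => cK w - fderiv ℝ cK z w with hFdef
    have hFdiff : ∀ w : X, DifferentiableAt ℝ F w := fun w =>
      (hcdiff w).sub ((fderiv ℝ cK z).differentiableAt)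
    have hFderiv : ∀ w : X, fderiv ℝ F w = fderiv ℝ cK w - fderiv ℝ cK z := by
      intro w
      rw [hFdef]
      rw [fderiv_fun_sub (hcdiff w) ((fderiv ℝ cK z).differentiableAt)]
      rw [ContinuousLinearMap.fderiv]
    have hseg : ∀ w ∈ segment ℝ z (z + u), ‖fderiv ℝ F w‖ ≤ L * ‖u‖ ^ α := by
      intro w hw
      rw [segment_eq_image'] at hw
      obtain ⟨θ, hθ, rfl⟩ := hw
      have hθ0 : 0 ≤ θ := hθ.1
      have hθ1 : θ ≤ 1 := hθ.2
      have he : z + u - z = u := by abel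
      rw [he]
      have hwn : ‖z + θ • u‖ ≤ ρ + 1 := by
        calc ‖z + θ • u‖ ≤ ‖z‖ + ‖θ • u‖ := norm_add_le _ _
          _ ≤ ρ + 1 := by
              rw [norm_smul, Real.norm_eq_abs, abs_of_nonneg hθ0]
              nlinarith [norm_nonneg u]
      have := hLb (z + θ • u) z hwn (by linarith)
      rw [hFderiv]
      have he2 : z + θ • u - z = θ • u := by abel
      rw [he2] at this
      calc ‖fderiv ℝ cK (z + θ • u) - fderiv ℝ cK z‖ ≤ L * ‖θ • u‖ ^ α := this
        _ ≤ L * ‖u‖ ^ α := by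
            apply mul_le_mul_of_nonneg_left _ hL.le
            apply Real.rpow_le_rpow (norm_nonneg _) _ hα0.le
            rw [norm_smul, Real.norm_eq_abs, abs_of_nonneg hθ0]
            nlinarith [norm_nonneg u]
    have hmvt := (convex_segment z (z + u)).norm_image_sub_le_of_norm_fderiv_le
      (fun w _ => hFdiff w) hseg (left_mem_segment ℝ z (z + u))
      (right_mem_segment ℝ z (z + u))
    have he3 : F (z + u) - F z = cK (z + u) - cK z - fderiv ℝ cK z u := by
      rw [hFdef]
      have : fderiv ℝ cK z (z + u) - fderiv ℝ cK z z = fderiv ℝ cK z u := by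
        rw [← map_sub]
        congr 1
        abel
      dsimp only
      linarith [this]
    have he4 : z + u - z = u := by abel
    rw [he4] at hmvt
    calc cK (z + u) - cK z - fderiv ℝ cK z u = F (z + u) - F z := he3.symm
      _ ≤ ‖F (z + u) - F z‖ := le_abs_self _
      _ ≤ L * ‖u‖ ^ α * ‖u‖ := hmvt
      _ = L * ‖u‖ ^ (1 + α) := by
          rcases eq_or_ne u 0 with rfl | hu0
          · simp [Real.zero_rpow hα0.ne', Real.zero_rpow (by positivity : (1:ℝ) + α ≠ 0)]
          · rw [Real.rpow_add (norm_pos_iff.2 hu0), Real.rpow_one]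
            ring
  have k1 := key h hh
  have k2 := key (-h) (by rw [norm_neg]; exact hh)
  have he5 : z + -h = z - h := by abel
  rw [he5, map_neg, norm_neg] at k2
  linarith

/-- Local Lipschitz bounds imply continuity. -/
lemma aux_cont_of_lip (σ : X → ℝ)
    (hlip : ∀ ρ : ℝ, 0 < ρ → ∃ ℓ : ℝ, 0 ≤ ℓ ∧ ∀ x y : X, ‖x‖ ≤ ρ → ‖y‖ ≤ ρ →
      σ x - σ y ≤ ℓ * ‖x - y‖) : Continuous σ := by
  rw [continuous_iff_continuousAt]
  intro x₀
  obtain ⟨ℓ, hℓ0, hℓ⟩ := hlip (‖x₀‖ + 1) (by positivity)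
  rw [Metric.continuousAt_iff]
  intro ε hε
  refine ⟨min 1 (ε / (ℓ + 1)), by positivity, fun {y} hy => ?_⟩
  rw [dist_eq_norm] at hy
  have hy1 : ‖y - x₀‖ < 1 := lt_of_lt_of_le hy (min_le_left _ _)
  have hy2 : ‖y - x₀‖ < ε / (ℓ + 1) := lt_of_lt_of_le hy (min_le_right _ _)
  have hyn : ‖y‖ ≤ ‖x₀‖ + 1 := by
    calc ‖y‖ = ‖x₀ + (y - x₀)‖ := by congr 1; abel
      _ ≤ ‖x₀‖ + ‖y - x₀‖ := norm_add_le _ _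
      _ ≤ ‖x₀‖ + 1 := by linarith
  have h1 := hℓ y x₀ hyn (by linarith)
  have h2 := hℓ x₀ y (by linarith) hyn
  rw [norm_sub_rev x₀ y] at h2
  rw [Real.dist_eq, abs_lt]
  have h3 : ℓ * ‖y - x₀‖ < ε := by
    calc ℓ * ‖y - x₀‖ ≤ ℓ * (ε / (ℓ + 1)) := by
          apply mul_le_mul_of_nonneg_left hy2.le hℓ0
      _ < ε := by
          rw [mul_div_assoc']
          rw [div_lt_iff₀ (by linarith)]
          nlinarith
  constructor <;> linarith

/-- Operator norm bound for a subgradient from a local Lipschitz bound. -/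
lemma aux_pnorm (σ : X → ℝ) (z : X) (p : X →L[ℝ] ℝ) (r ℓ : ℝ) (hℓ0 : 0 ≤ ℓ)
    (hz : ‖z‖ ≤ r) (hr : 0 < r)
    (hp : ∀ w, σ z + p (w - z) ≤ σ w)
    (hlip : ∀ x y : X, ‖x‖ ≤ r + 2 → ‖y‖ ≤ r + 2 → σ x - σ y ≤ ℓ * ‖x - y‖) :
    ‖p‖ ≤ ℓ := by
  have hpb : ∀ u : X, p u ≤ ℓ * ‖u‖ := by
    intro u
    rcases eq_or_ne u 0 with rfl | hu
    · simp
    have hun : 0 < ‖u‖ := norm_pos_iff.2 hu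
    set v := (‖u‖⁻¹) • u with hvdef
    have hvn : ‖v‖ = 1 := by
      rw [hvdef, norm_smul, Real.norm_eq_abs, abs_of_pos (by positivity)]
      field_simp
    have h1 : σ z + p (z + v - z) ≤ σ (z + v) := hp (z + v)
    have h2 : z + v - z = v := by abel
    rw [h2] at h1
    have h3 : σ (z + v) - σ z ≤ ℓ * ‖v‖ := by
      have hzv : ‖z + v‖ ≤ r + 2 := by
        calc ‖z + v‖ ≤ ‖z‖ + ‖v‖ := norm_add_le _ _
          _ ≤ r + 2 := by rw [hvn]; linarith
      have := hlip (z + v) z hzv (by linarith)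
      have he : z + v - z = v := by abel
      rwa [he] at this
    have h4 : p v ≤ ℓ := by rw [hvn] at h3; linarith
    have h5 : p u = ‖u‖ * p v := by
      rw [hvdef, map_smul, smul_eq_mul]
      field_simp
    rw [h5]
    calc ‖u‖ * p v ≤ ‖u‖ * ℓ := mul_le_mul_of_nonneg_left h4 hun.le
      _ = ℓ * ‖u‖ := mul_comm _ _
  apply ContinuousLinearMap.opNorm_le_bound _ hℓ0
  intro u
  rw [Real.norm_eq_abs, abs_le]
  constructor
  · have := hpb (-u)
    rw [map_neg, norm_neg] at this
    linarith
  · exact hpb u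

end aux

set_option maxHeartbeats 2000000 in
theorem stmt_16 {X : Type*} [NormedAddCommGroup X] [NormedSpace ℝ X] [CompleteSpace X]
    (K : X → X → ℝ) (cK : X → ℝ) (dK : X → X → ℝ)
    (hK1 : (∀ x y : X, 0 ≤ K x y) ∧ ∀ x : X, K x x = 0)
    (hK2 : ∀ x y : X, K x y = K y x)
    (hK3 : ∀ r M : ℝ, 0 < r → 0 < M → ∃ R : ℝ, ∀ x y : X, ‖x‖ ≤ r → R ≤ ‖y‖ → M ≤ K x y)
    (hK4 : ∀ s : Set (X × X), Bornology.IsBounded s →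
      UniformContinuousOn (fun q : X × X => K q.1 q.2) s)
    (hK5 : (∀ x y : X, K x y = cK x - dK x y) ∧
      ∀ y : X, LowerSemicontinuous (fun x => dK x y) ∧
        ConvexOn ℝ Set.univ (fun x => dK x y))
    (f : X → EReal)
    (hproper : ∃ x, f x ≠ ⊤)
    (hlsc : LowerSemicontinuous f)
    (hbdd : ∃ m : ℝ, ∀ x, (m : EReal) ≤ f x)
    (α : ℝ) (hα0 : 0 < α) (hα1 : α ≤ 1)
    (hcdiff : Differentiable ℝ cK)
    (hchold : ∀ r : ℝ, 0 < r → ∃ L : ℝ, 0 < L ∧ ∀ x y : X, ‖x‖ ≤ r → ‖y‖ ≤ r →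
      ‖fderiv ℝ cK x - fderiv ℝ cK y‖ ≤ L * ‖x - y‖ ^ α)
    (hcoer : ∀ M : ℝ, ∃ R : ℝ, ∀ x : X, R ≤ ‖x‖ → M ≤ cK x / ‖x‖)
    (n : ℕ) (hn : 0 < n) :
    Differentiable ℝ (DeltaK K cK f n) ∧
    ∀ r : ℝ, 0 < r → ∃ L : ℝ, 0 < L ∧ ∀ x y : X, ‖x‖ ≤ r → ‖y‖ ≤ r →
      ‖fderiv ℝ (DeltaK K cK f n) x - fderiv ℝ (DeltaK K cK f n) y‖ ≤
        L * ‖x - y‖ ^ α := by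
  obtain ⟨m, hm⟩ := hbdd
  obtain ⟨y₀, hy₀⟩ := hproper
  have hK0 := hK1.1
  -- basic facts about cK
  have hlip := aux_lip cK α hα0 hcdiff hchold
  have hckconv := aux_cK_convex K cK dK hK1 hK5
  have hlin := aux_linear_lb cK hlip hcoer
  -- the function g and its convex minorant b
  set g : X → ℝ := fun z => (infConvK K f n z).toReal + (n : ℝ) * cK z with hgdef
  set b : X → ℝ := fun z => m + (n : ℝ) * cK z with hbdef
  have hbconv : ConvexOn ℝ Set.univ b := by
    refine ⟨convex_univ, fun x _ y _ a c ha hc hac => ?_⟩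
    have h1 := hckconv.2 (Set.mem_univ x) (Set.mem_univ y) ha hc hac
    have hn0 : (0:ℝ) ≤ (n : ℝ) := Nat.cast_nonneg n
    simp only [smul_eq_mul] at h1
    have h2 : (n:ℝ) * cK (a • x + c • y) ≤ (n:ℝ) * (a * cK x + c * cK y) :=
      mul_le_mul_of_nonneg_left h1 hn0
    have h3 : a * m + c * m = m := by rw [← add_mul, hac, one_mul]
    simp only [hbdef, smul_eq_mul]
    linarith
  have hbg : ∀ z, b z ≤ g z := by
    intro z
    have := aux_inf_toReal_lb K f n m y₀ hK0 hm hy₀ z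
    simp only [hbdef, hgdef]
    linarith
  -- ψ is the convex envelope of g
  set ψ : X → ℝ := convEnv g with hψdef
  have hψconv : ConvexOn ℝ Set.univ ψ := aux_convEnv_convexOn g b hbconv hbg
  have hψg : ∀ z, ψ z ≤ g z := fun z => aux_convEnv_le_g g b hbconv hbg z
  have hψglb : ∀ z, m + (n : ℝ) * cK z ≤ ψ z := fun z =>
    aux_le_convEnv g b hbconv hbg z
  have hgglb : ∀ z, m + (n : ℝ) * cK z ≤ g z := hbg
  have hcombo : ∀ (mm : ℕ) (l : Fin mm → ℝ) (z : Fin mm → X), (∀ i, 0 < l i) →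
      (∑ i, l i = 1) → ψ (∑ i, l i • z i) ≤ ∑ i, l i * g (z i) :=
    fun mm l z hpos hsum => aux_convEnv_le_combo g b hbconv hbg l z hpos hsum
  have hexists : ∀ (x : X) (ε : ℝ), 0 < ε → ∃ (mm : ℕ) (l : Fin mm → ℝ) (z : Fin mm → X),
      (∀ i, 0 < l i) ∧ ∑ i, l i = 1 ∧ ∑ i, l i • z i = x ∧
      ∑ i, l i * g (z i) ≤ ψ x + ε :=
    fun x ε hε => aux_convEnv_exists g b hbconv hbg x ε hε
  -- upper bounds for g on balls
  have hgub : ∀ ρ : ℝ, 0 < ρ → ∃ G : ℝ, ∀ z : X, ‖z‖ ≤ ρ → g z ≤ G := by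
    intro ρ hρ
    obtain ⟨B, hB⟩ := aux_K_bound K hK4 y₀ ρ hρ
    obtain ⟨G, hG0, hGl⟩ := hlip ρ hρ
    refine ⟨(f y₀).toReal + (n : ℝ) * B + (n : ℝ) * (cK 0 + G * ρ), fun z hz => ?_⟩
    have h1 := aux_inf_toReal_ub K f n m y₀ hK0 hm hy₀ z y₀ hy₀
    have h2 : cK z ≤ cK 0 + G * ρ := by
      have := hGl z 0 hz (by simp [hρ.le])
      have habs := (abs_le.1 this).2
      have hzn : ‖z - 0‖ ≤ ρ := by rwa [sub_zero]
      nlinarith [norm_nonneg (z - 0)]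
    have h3 : K z y₀ ≤ B := hB z hz
    have hn0 : (0:ℝ) ≤ (n : ℝ) := Nat.cast_nonneg n
    simp only [hgdef]
    nlinarith [h1, h2, h3]
  -- ψ is Lipschitz on balls
  have hψlip : ∀ ρ : ℝ, 0 < ρ → ∃ ℓ : ℝ, 0 ≤ ℓ ∧ ∀ x y : X, ‖x‖ ≤ ρ → ‖y‖ ≤ ρ →
      ψ x - ψ y ≤ ℓ * ‖x - y‖ := by
    intro ρ hρ
    obtain ⟨M, hM⟩ := hgub (2 * ρ) (by linarith)
    obtain ⟨C₁, hC₁0, hC₁⟩ := hlin 1 one_pos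
    set mlow : ℝ := m - (n : ℝ) * C₁ with hmlowdef
    have hlb : ∀ z : X, ‖z‖ ≤ 2 * ρ → mlow ≤ ψ z := by
      intro z _
      have h1 := hψglb z
      have h2 := hC₁ z
      have hn0 : (0:ℝ) ≤ (n : ℝ) := Nat.cast_nonneg n
      have h3 : (n:ℝ) * (1 * ‖z‖ - C₁) ≤ (n:ℝ) * cK z :=
        mul_le_mul_of_nonneg_left h2 hn0
      have h4 : (0:ℝ) ≤ (n:ℝ) * ‖z‖ := by positivity
      rw [hmlowdef]
      nlinarith
    have hub : ∀ z : X, ‖z‖ ≤ 2 * ρ → ψ z ≤ M := fun z hz =>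
      le_trans (hψg z) (hM z hz)
    have := aux_convex_lip ψ hψconv ρ M mlow hρ hub hlb
    refine ⟨max 0 ((M - mlow) / ρ), le_max_left _ _, fun x y hx hy => ?_⟩
    calc ψ x - ψ y ≤ ((M - mlow) / ρ) * ‖x - y‖ := this x y hx hy
      _ ≤ max 0 ((M - mlow) / ρ) * ‖x - y‖ :=
          mul_le_mul_of_nonneg_right (le_max_right _ _) (norm_nonneg _)
  have hψcont : Continuous ψ := aux_cont_of_lip ψ hψlip
  have hψsub : ∀ x : X, ∃ p : X →L[ℝ] ℝ, ∀ z, ψ x + p (z - x) ≤ ψ z :=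
    fun x => aux_subgradient ψ hψconv hψcont x
  -- second-difference control of g
  have hsec : ∀ z h : X, g (z+h) + g (z-h) - 2 * g z ≤
      2 * (n : ℝ) * (cK (z+h) + cK (z-h) - 2 * cK z) := by
    have := aux_g_secdiff K cK dK (fun z => (infConvK K f n z).toReal)
      (fun y => (f y).toReal) (fun y => f y ≠ ⊤) n hK5.1 (fun y => (hK5.2 y).2)
      (fun x y hy => aux_inf_toReal_ub K f n m y₀ hK0 hm hy₀ x y hy)
      (fun x ε hε => aux_inf_approx K f n m y₀ hK0 hm hy₀ x ε hε)
    exact this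
  have hck2 := aux_cksec cK α hα0 hcdiff hchold
  -- the main second-difference estimate for ψ
  have hest := aux_main_estimate ψ g cK n m α hα0 hn hcombo hexists hψg hψglb hgglb
    hψsub hψlip hgub hlin hsec hck2
  -- differentiability of ψ
  have hhas : ∀ x : X, ∃ p : X →L[ℝ] ℝ, HasFDerivAt ψ p x ∧
      ∀ z, ψ x + p (z - x) ≤ ψ z := by
    intro x
    obtain ⟨p, hp⟩ := hψsub x
    obtain ⟨Cψ, hC0, hCb⟩ := hest (‖x‖ + 1) (by positivity)
    have hup : ∀ h : X, ‖h‖ ≤ 1 → ψ (x + h) ≤ ψ x + p h + Cψ * ‖h‖ ^ (1 + α) := by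
      intro h hh
      have h1 := hCb x h (by linarith) hh
      have h2 := hp (x - h)
      have he : x - h - x = -h := by abel
      rw [he, map_neg] at h2
      linarith
    exact ⟨p, aux_hasFDerivAt ψ x p Cψ α hα0 hp hup, hp⟩
  have hψdiff : Differentiable ℝ ψ := fun x => ((hhas x).choose_spec.1).differentiableAt
  have hψsubd : ∀ z w : X, ψ z + fderiv ℝ ψ z (w - z) ≤ ψ w := by
    intro z w
    obtain ⟨p, hp1, hp2⟩ := hhas z
    rw [hp1.fderiv]
    exact hp2 w
  -- Hölder continuity of the gradient of ψ on balls
  have hψhold : ∀ r : ℝ, 0 < r → ∃ C2 : ℝ, 0 ≤ C2 ∧ ∀ x y : X, ‖x‖ ≤ r → ‖y‖ ≤ r →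
      ‖fderiv ℝ ψ x - fderiv ℝ ψ y‖ ≤ C2 * ‖x - y‖ ^ α := by
    intro r hr
    obtain ⟨Cψ, hC0, hCb⟩ := hest r hr
    obtain ⟨ℓ, hℓ0, hℓb⟩ := hψlip (r + 2) (by linarith)
    have hup : ∀ z h : X, ‖z‖ ≤ r → ‖h‖ ≤ 1 →
        ψ (z + h) ≤ ψ z + fderiv ℝ ψ z h + Cψ * ‖h‖ ^ (1 + α) := by
      intro z h hz hh
      have h1 := hCb z h hz hh
      have h2 := hψsubd z (z - h)
      have he : z - h - z = -h := by abel
      rw [he, map_neg] at h2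
      linarith
    have hgradbd : ∀ z : X, ‖z‖ ≤ r → ‖fderiv ℝ ψ z‖ ≤ ℓ := fun z hz =>
      aux_pnorm ψ z (fderiv ℝ ψ z) r ℓ hℓ0 hz hr (hψsubd z) hℓb
    exact ⟨2 * Cψ + 2 * ℓ, by positivity,
      aux_holder_grad ψ α Cψ r ℓ hα0 hC0 hℓ0 hψdiff hψsubd hup hgradbd⟩
  -- transfer to DeltaK
  have hDeq : ∀ x : X, DeltaK K cK f n x = ψ x - (n : ℝ) * cK x := fun x => rfl
  have hfd : ∀ x : X, HasFDerivAt (DeltaK K cK f n)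
      (fderiv ℝ ψ x - (n : ℝ) • fderiv ℝ cK x) x := by
    intro x
    have h1 : HasFDerivAt (fun x => ψ x - (n : ℝ) * cK x)
        (fderiv ℝ ψ x - (n : ℝ) • fderiv ℝ cK x) x :=
      ((hψdiff x).hasFDerivAt).sub (((hcdiff x).hasFDerivAt).const_mul (n : ℝ))
    exact h1
  constructor
  · exact fun x => (hfd x).differentiableAt
  · intro r hr
    obtain ⟨C2, hC20, hC2b⟩ := hψhold r hr
    obtain ⟨L, hL, hLb⟩ := hchold r hr
    refine ⟨C2 + (n : ℝ) * L + 1, by positivity, fun x y hx hy => ?_⟩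
    rw [(hfd x).fderiv, (hfd y).fderiv]
    have hrw : (fderiv ℝ ψ x - (n : ℝ) • fderiv ℝ cK x) -
        (fderiv ℝ ψ y - (n : ℝ) • fderiv ℝ cK y)
        = (fderiv ℝ ψ x - fderiv ℝ ψ y) -
          (n : ℝ) • (fderiv ℝ cK x - fderiv ℝ cK y) := by
      rw [smul_sub]; abel
    rw [hrw]
    have h1 := hC2b x y hx hy
    have h2 := hLb x y hx hy
    have hrp : (0:ℝ) ≤ ‖x - y‖ ^ α := Real.rpow_nonneg (norm_nonneg _) _
    calc ‖(fderiv ℝ ψ x - fderiv ℝ ψ y) -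
          (n : ℝ) • (fderiv ℝ cK x - fderiv ℝ cK y)‖
        ≤ ‖fderiv ℝ ψ x - fderiv ℝ ψ y‖ +
          ‖(n : ℝ) • (fderiv ℝ cK x - fderiv ℝ cK y)‖ := norm_sub_le _ _
      _ = ‖fderiv ℝ ψ x - fderiv ℝ ψ y‖ +
          (n : ℝ) * ‖fderiv ℝ cK x - fderiv ℝ cK y‖ := by
          rw [norm_smul, Real.norm_eq_abs, abs_of_nonneg (Nat.cast_nonneg n)]
      _ ≤ C2 * ‖x - y‖ ^ α + (n : ℝ) * (L * ‖x - y‖ ^ α) := by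
          have := mul_le_mul_of_nonneg_left h2 (Nat.cast_nonneg n : (0:ℝ) ≤ (n:ℝ))
          linarith
      _ ≤ (C2 + (n : ℝ) * L + 1) * ‖x - y‖ ^ α := by nlinarith [hrp]
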